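/- Let T_L, T_R > 0. For each integer N ≥ 2, let (T_0^{(N)}, …, T_N^{(N)}) be the unique family of positive reals with T_0^{(N)} = T_L, T_N^{(N)} = T_R satisfying the confined self-consistency equations (T_n − T_{n+1})/(T_n^{−1/2} + T_{n+1}^{−1/2}) + (T_n − T_{n−1})/(T_n^{−1/2} + T_{n−1}^{−1/2}) = 0 for all n = 1, …, N−1, and let h_N : [0,1] → ℝ be the piecewise-linear interpolation defined by h_N(x) = T_L + ∫_0^x g_N(t) dt, where g_N = ∑_{i=0}^{N−1} 1_{[i/N, (i+1)/N)} · N·(T_{i+1}^{(N)} − T_i^{(N)}), so that h_N(i/N) = T_i^{(N)}. Then h_N converges uniformly on [0,1] to the function h(x) = (T_L^{3/2} + x·(T_R^{3/2} − T_L^{3/2}))^{2/3}. -/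

import Mathlib

open MeasureTheory Filter

lemma quot_eq (a b : ℝ) (ha : 0 < a) (hb : 0 < b) :
    (a - b) / (a ^ (-(1:ℝ)/2) + b ^ (-(1:ℝ)/2))
      = Real.sqrt a * Real.sqrt b * (Real.sqrt a - Real.sqrt b) := by
  have hsa : (0:ℝ) < Real.sqrt a := Real.sqrt_pos.2 ha
  have hsb : (0:ℝ) < Real.sqrt b := Real.sqrt_pos.2 hb
  have ha2 : Real.sqrt a ^ 2 = a := Real.sq_sqrt ha.le
  have hb2 : Real.sqrt b ^ 2 = b := Real.sq_sqrt hb.le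
  have hra : a ^ (-(1:ℝ)/2) = (Real.sqrt a)⁻¹ := by
    rw [show (-(1:ℝ)/2) = -(1/2) by ring, Real.rpow_neg ha.le, ← Real.sqrt_eq_rpow]
  have hrb : b ^ (-(1:ℝ)/2) = (Real.sqrt b)⁻¹ := by
    rw [show (-(1:ℝ)/2) = -(1/2) by ring, Real.rpow_neg hb.le, ← Real.sqrt_eq_rpow]
  rw [hra, hrb]
  rw [div_eq_iff (by positivity)]
  field_simp
  linear_combination (-1:ℝ)*ha2 + hb2

lemma ind_ii (a b c y x : ℝ) :
    IntervalIntegrable ((Set.Ico a b).indicator fun _ => c) volume y x := by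
  rw [intervalIntegrable_iff]
  refine Integrable.integrableOn ?_
  rw [integrable_indicator_iff measurableSet_Ico]
  exact integrableOn_const measure_Ico_lt_top.ne enorm_ne_top

lemma ae_ne (p : ℝ) : ∀ᵐ t : ℝ, t ≠ p := by
  refine MeasureTheory.ae_iff.2 ?_
  simpa using MeasureTheory.measure_singleton (μ := (volume : Measure ℝ)) p

lemma cell_integral (N : ℕ) (c : ℕ → ℝ) (j : ℕ) (hj : j < N) (y x : ℝ)
    (hy : (j:ℝ)/N ≤ y) (hyx : y ≤ x) (hx : x ≤ ((j:ℝ)+1)/N) :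
    ∫ t in y..x, (∑ i ∈ Finset.range N,
      Set.indicator (Set.Ico ((i : ℝ) / N) (((i : ℝ) + 1) / N)) (fun _ => c i) t)
      = c j * (x - y) := by
  have hN : (0:ℝ) < N := Nat.cast_pos.2 (Nat.zero_lt_of_lt hj)
  rw [intervalIntegral.integral_finset_sum (fun i _ => ind_ii _ _ _ _ _)]
  rw [Finset.sum_eq_single j]
  · have h1 : ∫ t in y..x, Set.indicator (Set.Ico ((j : ℝ) / N) (((j : ℝ) + 1) / N))
        (fun _ => c j) t = ∫ t in y..x, c j := by
      apply intervalIntegral.integral_congr_ae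
      filter_upwards [ae_ne (((j:ℝ)+1)/N)] with t ht hmem
      rw [Set.uIoc_of_le hyx] at hmem
      have h2 : t ∈ Set.Ico ((j : ℝ) / N) (((j : ℝ) + 1) / N) :=
        ⟨le_trans hy hmem.1.le, lt_of_le_of_ne (le_trans hmem.2 hx) ht⟩
      simp [Set.indicator_of_mem h2]
    rw [h1, intervalIntegral.integral_const, smul_eq_mul, mul_comm]
  · intro i hi hij
    rcases lt_or_gt_of_ne hij with hlt | hgt
    · have hle : ((i:ℝ)+1)/N ≤ (j:ℝ)/N := by
        apply div_le_div_of_nonneg_right ?_ hN.le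
        have : (i:ℝ) + 1 ≤ (j:ℝ) := by exact_mod_cast Nat.succ_le_of_lt hlt
        linarith
      have : ∫ t in y..x, Set.indicator (Set.Ico ((i : ℝ) / N) (((i : ℝ) + 1) / N))
          (fun _ => c i) t = ∫ t in y..x, (0:ℝ) := by
        apply intervalIntegral.integral_congr
        intro t htm
        rw [Set.uIcc_of_le hyx] at htm
        have : t ∉ Set.Ico ((i : ℝ) / N) (((i : ℝ) + 1) / N) := by
          intro hmem
          exact absurd (lt_of_lt_of_le hmem.2 (le_trans hle (le_trans hy htm.1))) (lt_irrefl t)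
        simp [Set.indicator_of_notMem this]
      simp [this]
    · have hle : ((j:ℝ)+1)/N ≤ (i:ℝ)/N := by
        apply div_le_div_of_nonneg_right ?_ hN.le
        exact_mod_cast Nat.succ_le_of_lt hgt
      have : ∫ t in y..x, Set.indicator (Set.Ico ((i : ℝ) / N) (((i : ℝ) + 1) / N))
          (fun _ => c i) t = ∫ t in y..x, (0:ℝ) := by
        apply intervalIntegral.integral_congr_ae
        filter_upwards [ae_ne ((i:ℝ)/N)] with t ht hmem
        rw [Set.uIoc_of_le hyx] at hmem
        have : t ∉ Set.Ico ((i : ℝ) / N) (((i : ℝ) + 1) / N) := by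
          intro hm
          exact ht (le_antisymm (le_trans hmem.2 (le_trans hx hle)) hm.1)
        simp [Set.indicator_of_notMem this]
      simp [this]
  · intro h; exact absurd (Finset.mem_range.2 hj) h

lemma g_ii (N : ℕ) (c : ℕ → ℝ) (y x : ℝ) :
    IntervalIntegrable (fun t => ∑ i ∈ Finset.range N,
      Set.indicator (Set.Ico ((i : ℝ) / N) (((i : ℝ) + 1) / N)) (fun _ => c i) t)
      volume y x := by
  have := IntervalIntegrable.sum (Finset.range N)
    (f := fun i => (Set.Ico ((i : ℝ) / N) (((i : ℝ) + 1) / N)).indicator (fun _ => c i))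
    (μ := volume) (a := y) (b := x) (fun i _ => ind_ii _ _ _ _ _)
  convert this using 1
  · rfl
  ext t
  simp [Finset.sum_apply]

lemma interp_formula (N : ℕ) (c : ℕ → ℝ) (S : ℕ → ℝ) (hS0 : S 0 = 0)
    (hSstep : ∀ i, S (i+1) = S i + c i / N) (j : ℕ) (hj : j < N) (x : ℝ)
    (hy : (j:ℝ)/N ≤ x) (hx : x ≤ ((j:ℝ)+1)/N) :
    ∫ t in (0:ℝ)..x, (∑ i ∈ Finset.range N,
      Set.indicator (Set.Ico ((i : ℝ) / N) (((i : ℝ) + 1) / N)) (fun _ => c i) t)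
      = S j + c j * (x - (j:ℝ)/N) := by
  have hN : (0:ℝ) < N := Nat.cast_pos.2 (Nat.zero_lt_of_lt hj)
  have grid : ∀ k, k ≤ N → ∫ t in (0:ℝ)..((k:ℝ)/N), (∑ i ∈ Finset.range N,
      Set.indicator (Set.Ico ((i : ℝ) / N) (((i : ℝ) + 1) / N)) (fun _ => c i) t) = S k := by
    intro k
    induction k with
    | zero => intro _; simp [hS0]
    | succ k ih =>
      intro hk
      have hkN : k < N := hk
      have hsplit := intervalIntegral.integral_add_adjacent_intervals
        (a := (0:ℝ)) (b := (k:ℝ)/N) (c := ((k:ℝ)+1)/N)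
        (g_ii N c 0 ((k:ℝ)/N)) (g_ii N c ((k:ℝ)/N) (((k:ℝ)+1)/N))
      have hcell := cell_integral N c k hkN ((k:ℝ)/N) (((k:ℝ)+1)/N) le_rfl
        (by apply div_le_div_of_nonneg_right (by linarith) hN.le) le_rfl
      have : ((k:ℝ)+1)/N - (k:ℝ)/N = 1/N := by field_simp; ring
      rw [ih hkN.le, hcell, this] at hsplit
      have hcast : (((k+1:ℕ)):ℝ)/N = ((k:ℝ)+1)/N := by push_cast; ring
      rw [hcast, ← hsplit, hSstep k]
      field_simp
  have hsplit := intervalIntegral.integral_add_adjacent_intervals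
    (a := (0:ℝ)) (b := (j:ℝ)/N) (c := x)
    (g_ii N c 0 ((j:ℝ)/N)) (g_ii N c ((j:ℝ)/N) x)
  rw [grid j hj.le, cell_integral N c j hj ((j:ℝ)/N) x le_rfl hy hx] at hsplit
  linarith

noncomputable def CC (a b : ℝ) : ℝ :=
  2 * max a b * ((max a b - min a b) * max a b ^ 2 / min a b ^ 2) +
    2 * max a b * (2 * (max a b - min a b) * ((max a b - min a b) * max a b ^ 2 / min a b ^ 2) ^ 2
      + (max a b ^ 3 - min a b ^ 3)) / (3 * min a b ^ 2)

lemma cube_diff_lower (m a b : ℝ) (hm : 0 ≤ m) (ha : m ≤ a) (hb : m ≤ b) :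
    3 * m ^ 2 * |a - b| ≤ |a ^ 3 - b ^ 3| := by
  have key : ∀ p q : ℝ, m ≤ p → m ≤ q → q ≤ p → 3 * m ^ 2 * (p - q) ≤ p ^ 3 - q ^ 3 := by
    intro p q hp hq hqp
    have h1 : 0 ≤ p ^ 2 + p * q + q ^ 2 - 3 * m ^ 2 := by
      nlinarith [pow_le_pow_left₀ hm hp 2, pow_le_pow_left₀ hm hq 2,
        mul_le_mul hp hq hm (hm.trans hp)]
    nlinarith [mul_nonneg (sub_nonneg.2 hqp) h1]
  rcases le_total a b with h | h
  · rw [abs_of_nonpos (by linarith),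
      abs_of_nonpos (sub_nonpos.2 (pow_le_pow_left₀ (hm.trans ha) h 3))]
    linarith [key b a hb ha h]
  · rw [abs_of_nonneg (by linarith),
      abs_of_nonneg (sub_nonneg.2 (pow_le_pow_left₀ (hm.trans hb) h 3))]
    linarith [key a b ha hb h]

set_option maxHeartbeats 2000000 in
lemma profile_est (N : ℕ) (hN : 2 ≤ N) (u : ℕ → ℝ)
    (hupos : ∀ n ≤ N, 0 < u n)
    (hconst : ∀ n < N, u n * u (n+1) * (u (n+1) - u n) = u 0 * u 1 * (u 1 - u 0))
    (j : ℕ) (hj : j < N) (x : ℝ) (hx0 : (j:ℝ)/N ≤ x) (hx1 : x ≤ ((j:ℝ)+1)/N) (hxI : x ≤ 1) :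
    |u j ^ 2 + (N:ℝ) * (u (j+1) ^ 2 - u j ^ 2) * (x - (j:ℝ)/N)
      - ((u 0) ^ 3 + x * ((u N) ^ 3 - (u 0) ^ 3)) ^ ((2:ℝ)/3)| ≤ CC (u 0) (u N) / N := by
  have hNpos : (0:ℝ) < N := by
    have : 0 < N := by omega
    exact_mod_cast this
  set m := min (u 0) (u N) with hm
  set M := max (u 0) (u N) with hM
  have hu0 : 0 < u 0 := hupos 0 (by omega)
  have huN : 0 < u N := hupos N le_rfl
  have hm0 : 0 < m := lt_min hu0 huN
  have hmM : m ≤ M := min_le_max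
  have hM0 : 0 < M := lt_of_lt_of_le hm0 hmM
  set c := u 0 * u 1 * (u 1 - u 0) with hc
  -- monotonicity: bounds and sum of |Δ|
  have htel : ∑ k ∈ Finset.range N, (u (k+1) - u k) = u N - u 0 := Finset.sum_range_sub u N
  have hmono : (∀ n ≤ N, m ≤ u n ∧ u n ≤ M) ∧
      (∑ k ∈ Finset.range N, |u (k+1) - u k|) = M - m := by
    rcases le_or_gt 0 c with hc0 | hc0
    · have hstep : ∀ n < N, u n ≤ u (n+1) := by
        intro n hn
        have h1 := hconst n hn
        have h2 : 0 < u n * u (n+1) := mul_pos (hupos n hn.le) (hupos (n+1) hn)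
        nlinarith
      have hmono2 : ∀ b ≤ N, ∀ a ≤ b, u a ≤ u b := by
        intro b
        induction b with
        | zero => intro _ a ha; simp [Nat.le_zero.mp ha]
        | succ b ih =>
          intro hb a ha
          rcases Nat.lt_succ_iff_lt_or_eq.mp (Nat.lt_succ_of_le ha) with h' | rfl
          · exact (ih (by omega) a (by omega)).trans (hstep b (by omega))
          · exact le_rfl
      have h0N : u 0 ≤ u N := hmono2 N le_rfl 0 (Nat.zero_le N)
      refine ⟨fun n hn => ⟨le_trans (min_le_left _ _) (hmono2 n hn 0 (Nat.zero_le n)),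
        le_trans (hmono2 N le_rfl n hn) (le_max_right _ _)⟩, ?_⟩
      have h1 : ∀ k ∈ Finset.range N, |u (k+1) - u k| = u (k+1) - u k := fun k hk =>
        abs_of_nonneg (sub_nonneg.2 (hstep k (Finset.mem_range.1 hk)))
      rw [Finset.sum_congr rfl h1, htel, hm, hM, min_eq_left h0N, max_eq_right h0N]
    · have hstep : ∀ n < N, u (n+1) ≤ u n := by
        intro n hn
        have h1 := hconst n hn
        have h2 : 0 < u n * u (n+1) := mul_pos (hupos n hn.le) (hupos (n+1) hn)
        nlinarith
      have hmono2 : ∀ b ≤ N, ∀ a ≤ b, u b ≤ u a := by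
        intro b
        induction b with
        | zero => intro _ a ha; simp [Nat.le_zero.mp ha]
        | succ b ih =>
          intro hb a ha
          rcases Nat.lt_succ_iff_lt_or_eq.mp (Nat.lt_succ_of_le ha) with h' | rfl
          · exact (hstep b (by omega)).trans (ih (by omega) a (by omega))
          · exact le_rfl
      have h0N : u N ≤ u 0 := hmono2 N le_rfl 0 (Nat.zero_le N)
      refine ⟨fun n hn => ⟨le_trans (min_le_right _ _) (hmono2 N le_rfl n hn),
        le_trans (hmono2 n hn 0 (Nat.zero_le n)) (le_max_left _ _)⟩, ?_⟩
      have h1 : ∀ k ∈ Finset.range N, |u (k+1) - u k| = -(u (k+1) - u k) := fun k hk =>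
        abs_of_nonpos (sub_nonpos.2 (hstep k (Finset.mem_range.1 hk)))
      rw [Finset.sum_congr rfl h1, Finset.sum_neg_distrib, htel, hm, hM,
        min_eq_right h0N, max_eq_left h0N]
      ring
  obtain ⟨hbnd, hsum⟩ := hmono
  set D := M - m with hD
  have hD0 : 0 ≤ D := by linarith
  have habs : ∀ n < N, |u (n+1) - u n| * (u n * u (n+1)) = |c| := by
    intro n hn
    rw [← hconst n hn, abs_mul, abs_of_pos (mul_pos (hupos n hn.le) (hupos (n+1) hn))]
    ring
  set β := D * M ^ 2 / m ^ 2 with hβ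
  have hβ0 : 0 ≤ β := by positivity
  have hcb : |c| * N ≤ D * M ^ 2 := by
    have h1 : ∀ k ∈ Finset.range N, |c| / M ^ 2 ≤ |u (k+1) - u k| := by
      intro k hk
      have hk' := Finset.mem_range.1 hk
      have h3 : u k * u (k+1) ≤ M ^ 2 := by
        have b1 := hbnd k hk'.le
        have b2 := hbnd (k+1) hk'
        nlinarith
      rw [div_le_iff₀ (by positivity)]
      calc |c| = |u (k+1) - u k| * (u k * u (k+1)) := (habs k hk').symm
        _ ≤ |u (k+1) - u k| * M ^ 2 := mul_le_mul_of_nonneg_left h3 (abs_nonneg _)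
    have h4 := Finset.sum_le_sum h1
    rw [Finset.sum_const, Finset.card_range, hsum, nsmul_eq_mul] at h4
    have hM2 : (0:ℝ) < M ^ 2 := by positivity
    rw [← sub_nonneg]
    have : D * M ^ 2 - |c| * N = (D - N * (|c| / M ^ 2)) * M ^ 2 := by field_simp
    rw [this]
    have : (0:ℝ) ≤ D - N * (|c| / M ^ 2) := by linarith
    positivity
  have hΔ : ∀ n < N, |u (n+1) - u n| ≤ β / N := by
    intro n hn
    have h2 := habs n hn
    have h3 : m ^ 2 ≤ u n * u (n+1) := by
      have b1 := hbnd n hn.le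
      have b2 := hbnd (n+1) hn
      nlinarith
    have h5 : |u (n+1) - u n| * m ^ 2 ≤ |c| := by
      rw [← h2]
      exact mul_le_mul_of_nonneg_left h3 (abs_nonneg _)
    have h6 : |c| ≤ D * M ^ 2 / N := by rw [le_div_iff₀ hNpos]; exact hcb
    have h7 : |u (n+1) - u n| ≤ |c| / m ^ 2 := by
      rw [le_div_iff₀ (by positivity)]; exact h5
    calc |u (n+1) - u n| ≤ |c| / m ^ 2 := h7
      _ ≤ (D * M ^ 2 / N) / m ^ 2 := by gcongr
      _ = β / N := by rw [hβ]; ring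
  -- sums of cubes
  have hsum_cube : ∀ n ≤ N, |∑ k ∈ Finset.range n, (u (k+1) - u k) ^ 3| ≤ D * β ^ 2 / N ^ 2 := by
    intro n hn
    calc |∑ k ∈ Finset.range n, (u (k+1) - u k) ^ 3|
        ≤ ∑ k ∈ Finset.range n, |(u (k+1) - u k) ^ 3| := Finset.abs_sum_le_sum_abs _ _
      _ ≤ ∑ k ∈ Finset.range n, (β / N) ^ 2 * |u (k+1) - u k| := by
          refine Finset.sum_le_sum fun k hk => ?_
          have h1 := hΔ k (lt_of_lt_of_le (Finset.mem_range.1 hk) hn)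
          have h0 := abs_nonneg (u (k+1) - u k)
          rw [abs_pow]
          have h2 := mul_le_mul h1 h1 h0 (by positivity : (0:ℝ) ≤ β / N)
          have h3 := mul_le_mul_of_nonneg_right h2 h0
          calc |u (k+1) - u k| ^ 3 = |u (k+1) - u k| * |u (k+1) - u k| * |u (k+1) - u k| := by
                ring
            _ ≤ β / ↑N * (β / ↑N) * |u (k+1) - u k| := h3
            _ = (β / ↑N) ^ 2 * |u (k+1) - u k| := by ring
      _ ≤ ∑ k ∈ Finset.range N, (β / N) ^ 2 * |u (k+1) - u k| := by
          refine Finset.sum_le_sum_of_subset_of_nonneg (Finset.range_subset_range.2 hn) ?_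
          intro k _ _; positivity
      _ = (β / N) ^ 2 * D := by rw [← Finset.mul_sum, hsum]
      _ = D * β ^ 2 / N ^ 2 := by ring
  have hphi : ∀ n ≤ N, u n ^ 3
      = u 0 ^ 3 + 3 * n * c + ∑ k ∈ Finset.range n, (u (k+1) - u k) ^ 3 := by
    intro n hn
    have htel3 := Finset.sum_range_sub (fun k => u k ^ 3) n
    have hterm : ∀ k ∈ Finset.range n, (fun k => u k ^ 3) (k+1) - (fun k => u k ^ 3) k
        = 3 * c + (u (k+1) - u k) ^ 3 := by
      intro k hk
      have h1 := hconst k (lt_of_lt_of_le (Finset.mem_range.1 hk) hn)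
      simp only
      linear_combination 3 * h1
    rw [Finset.sum_congr rfl hterm, Finset.sum_add_distrib, Finset.sum_const,
      Finset.card_range, nsmul_eq_mul] at htel3
    linarith [htel3]
  set L := u 0 ^ 3 with hL
  set R := u N ^ 3 with hR
  have hlin : ∀ n ≤ N, |u n ^ 3 - (L + ((n:ℝ)/N) * (R - L))| ≤ 2 * (D * β ^ 2 / N ^ 2) := by
    intro n hn
    have E1 := hphi n hn
    have E2 := hphi N le_rfl
    have hNne : (N:ℝ) ≠ 0 := ne_of_gt hNpos
    set Sn := ∑ k ∈ Finset.range n, (u (k+1) - u k) ^ 3 with hSn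
    set SN := ∑ k ∈ Finset.range N, (u (k+1) - u k) ^ 3 with hSN
    have hkey0 : (N:ℝ) * (u n ^ 3) - ((N:ℝ) * L + (n:ℝ) * (R - L))
        = (N:ℝ) * Sn - (n:ℝ) * SN := by
      linear_combination (N:ℝ) * E1 - (n:ℝ) * E2
    have hkey : u n ^ 3 - (L + ((n:ℝ)/N) * (R - L)) = Sn - ((n:ℝ)/N) * SN := by
      field_simp
      linear_combination hkey0
    rw [hkey]
    have b1 := hsum_cube n hn
    have b2 := hsum_cube N le_rfl
    have hfr0 : (0:ℝ) ≤ (n:ℝ)/N := by positivity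
    have hfr1 : (n:ℝ)/N ≤ 1 := by
      rw [div_le_one hNpos]; exact_mod_cast hn
    have h9 := abs_sub Sn (((n:ℝ)/N) * SN)
    rw [abs_mul, abs_of_nonneg hfr0] at h9
    have hSN0 := abs_nonneg SN
    have h10 : ((n:ℝ)/N) * |SN| ≤ 1 * |SN| := mul_le_mul_of_nonneg_right hfr1 hSN0
    linarith
  -- continuum value at x
  have hx0' : (0:ℝ) ≤ x := le_trans (by positivity) hx0
  set ℓ := L + x * (R - L) with hℓ
  have hLb : m ^ 3 ≤ L ∧ L ≤ M ^ 3 :=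
    ⟨pow_le_pow_left₀ hm0.le (min_le_left _ _) 3, pow_le_pow_left₀ hu0.le (le_max_left _ _) 3⟩
  have hRb : m ^ 3 ≤ R ∧ R ≤ M ^ 3 :=
    ⟨pow_le_pow_left₀ hm0.le (min_le_right _ _) 3, pow_le_pow_left₀ huN.le (le_max_right _ _) 3⟩
  have hℓb : m ^ 3 ≤ ℓ ∧ ℓ ≤ M ^ 3 := by
    constructor
    · linarith [mul_nonneg hx0' (sub_nonneg.2 hRb.1), mul_nonneg (sub_nonneg.2 hxI)
        (sub_nonneg.2 hLb.1)]
    · linarith [mul_nonneg hx0' (sub_nonneg.2 hRb.2), mul_nonneg (sub_nonneg.2 hxI)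
        (sub_nonneg.2 hLb.2)]
  have hℓ0 : 0 < ℓ := lt_of_lt_of_le (by positivity) hℓb.1
  set w := ℓ ^ ((1:ℝ)/3) with hw
  have hw0 : 0 ≤ w := Real.rpow_nonneg hℓ0.le _
  have hw3 : w ^ 3 = ℓ := by
    rw [hw, ← Real.rpow_natCast (ℓ ^ ((1:ℝ)/3)) 3, ← Real.rpow_mul hℓ0.le]
    norm_num
  have hw2 : w ^ 2 = ℓ ^ ((2:ℝ)/3) := by
    rw [hw, ← Real.rpow_natCast (ℓ ^ ((1:ℝ)/3)) 2, ← Real.rpow_mul hℓ0.le]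
    norm_num
  have hwm : m ≤ w := by
    apply le_of_pow_le_pow_left₀ (n := 3) (by norm_num) hw0
    rw [hw3]; exact hℓb.1
  have hwM : w ≤ M := by
    apply le_of_pow_le_pow_left₀ (n := 3) (by norm_num) hM0.le
    rw [hw3]; exact hℓb.2
  have hgrid := hlin j hj.le
  have hRLb : |R - L| ≤ M ^ 3 - m ^ 3 := by
    rw [abs_le]; constructor <;> [linarith [hLb.2, hRb.1]; linarith [hLb.1, hRb.2]]
  have h1N : (0:ℝ) < 1/N := by positivity
  have hxj : |x - (j:ℝ)/N| ≤ 1 / N := by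
    rw [abs_le]; constructor
    · linarith
    · have : ((j:ℝ)+1)/N - (j:ℝ)/N = 1/N := by field_simp; ring
      linarith
  have hcube_x : |u j ^ 3 - ℓ| ≤ 2 * (D * β ^ 2 / N ^ 2) + (M ^ 3 - m ^ 3) / N := by
    have t0 : u j ^ 3 - ℓ
        = (u j ^ 3 - (L + ((j:ℝ)/N) * (R - L))) - (x - (j:ℝ)/N) * (R - L) := by
      rw [hℓ]; ring
    calc |u j ^ 3 - ℓ|
        ≤ |u j ^ 3 - (L + ((j:ℝ)/N) * (R - L))| + |(x - (j:ℝ)/N) * (R - L)| := by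
          rw [t0]; exact abs_sub _ _
      _ ≤ 2 * (D * β ^ 2 / N ^ 2) + (1/N) * (M ^ 3 - m ^ 3) := by
          rw [abs_mul]
          have := mul_le_mul hxj hRLb (abs_nonneg _) (by positivity)
          linarith [hgrid]
      _ = 2 * (D * β ^ 2 / N ^ 2) + (M ^ 3 - m ^ 3) / N := by ring
  have hujm := hbnd j hj.le
  have hcd := cube_diff_lower m (u j) w hm0.le hujm.1 hwm
  rw [hw3] at hcd
  have hsq : |u j ^ 2 - w ^ 2| ≤ 2 * M * |u j - w| := by
    have t1 : u j ^ 2 - w ^ 2 = (u j + w) * (u j - w) := by ring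
    rw [t1, abs_mul, abs_of_nonneg (by linarith [hupos j hj.le] : (0:ℝ) ≤ u j + w)]
    exact mul_le_mul_of_nonneg_right (by linarith [hujm.2]) (abs_nonneg _)
  have hslope : |u (j+1) ^ 2 - u j ^ 2| ≤ 2 * M * (β / N) := by
    have h1 := hΔ j hj
    have t1 : u (j+1) ^ 2 - u j ^ 2 = (u (j+1) + u j) * (u (j+1) - u j) := by ring
    have hup1 := hupos (j+1) hj
    rw [t1, abs_mul, abs_of_nonneg (by linarith [hupos j hj.le] : (0:ℝ) ≤ u (j+1) + u j)]
    have hb2 : u (j+1) + u j ≤ 2 * M := by linarith [(hbnd (j+1) hj).2, hujm.2]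
    exact mul_le_mul hb2 h1 (abs_nonneg _) (by positivity)
  have hfrac1 : (N:ℝ) * (x - (j:ℝ)/N) ≤ 1 := by
    have t1 : x - (j:ℝ)/N ≤ 1/N := by linarith [(abs_le.1 hxj).2]
    calc (N:ℝ) * (x - (j:ℝ)/N) ≤ (N:ℝ) * (1/N) := by
          exact mul_le_mul_of_nonneg_left t1 hNpos.le
      _ = 1 := by field_simp
  have key1 : |u j ^ 2 - w ^ 2| ≤ 2 * M * (2 * D * β ^ 2 + (M ^ 3 - m ^ 3)) / (3 * m ^ 2) / N := by
    have e1 : 3 * m ^ 2 * |u j ^ 2 - w ^ 2| ≤ 2 * M * |u j ^ 3 - ℓ| := by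
      calc 3 * m ^ 2 * |u j ^ 2 - w ^ 2| ≤ 3 * m ^ 2 * (2 * M * |u j - w|) :=
            mul_le_mul_of_nonneg_left hsq (by positivity)
        _ = 2 * M * (3 * m ^ 2 * |u j - w|) := by ring
        _ ≤ 2 * M * |u j ^ 3 - ℓ| := mul_le_mul_of_nonneg_left hcd (by positivity)
    have h2N : 2 * (D * β ^ 2 / N ^ 2) ≤ 2 * D * β ^ 2 / N := by
      have h1le : (1:ℝ) ≤ N := by
        have : (1:ℕ) ≤ N := by omega
        exact_mod_cast this
      have hNN : (N:ℝ) ≤ N ^ 2 := by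
        calc (N:ℝ) = N * 1 := (mul_one _).symm
          _ ≤ N * N := mul_le_mul_of_nonneg_left h1le hNpos.le
          _ = N ^ 2 := (sq (N:ℝ)).symm
      calc 2 * (D * β ^ 2 / N ^ 2) = 2 * D * β ^ 2 / N ^ 2 := by ring
        _ ≤ 2 * D * β ^ 2 / N := by gcongr <;> positivity
    have e2 : |u j ^ 3 - ℓ| ≤ (2 * D * β ^ 2 + (M ^ 3 - m ^ 3)) / N := by
      calc |u j ^ 3 - ℓ| ≤ 2 * (D * β ^ 2 / N ^ 2) + (M ^ 3 - m ^ 3) / N := hcube_x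
        _ ≤ 2 * D * β ^ 2 / N + (M ^ 3 - m ^ 3) / N := by linarith
        _ = (2 * D * β ^ 2 + (M ^ 3 - m ^ 3)) / N := by ring
    have e3 := le_trans e1 (mul_le_mul_of_nonneg_left e2 (by positivity : (0:ℝ) ≤ 2 * M))
    have h3 := mul_le_mul_of_nonneg_left e3 hNpos.le
    rw [div_div, le_div_iff₀ (by positivity)]
    calc |u j ^ 2 - w ^ 2| * (3 * m ^ 2 * N) = (N:ℝ) * (3 * m ^ 2 * |u j ^ 2 - w ^ 2|) := by ring
      _ ≤ (N:ℝ) * (2 * M * ((2 * D * β ^ 2 + (M ^ 3 - m ^ 3)) / N)) := h3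
      _ = 2 * M * (2 * D * β ^ 2 + (M ^ 3 - m ^ 3)) := by field_simp
  have key2 : |(N:ℝ) * (x - (j:ℝ)/N)| * |u (j+1) ^ 2 - u j ^ 2| ≤ 2 * M * β / N := by
    have hle1 : |(N:ℝ) * (x - (j:ℝ)/N)| ≤ 1 := by
      rw [abs_le]; constructor
      · have : (0:ℝ) ≤ (N:ℝ) * (x - (j:ℝ)/N) := mul_nonneg hNpos.le (by linarith)
        linarith
      · exact hfrac1
    calc |(N:ℝ) * (x - (j:ℝ)/N)| * |u (j+1) ^ 2 - u j ^ 2|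
        ≤ 1 * (2 * M * (β / N)) := mul_le_mul hle1 hslope (abs_nonneg _) zero_le_one
      _ = 2 * M * β / N := by ring
  have hCC : CC (u 0) (u N)
      = 2 * M * β + 2 * M * (2 * D * β ^ 2 + (M ^ 3 - m ^ 3)) / (3 * m ^ 2) := by
    simp only [CC, ← hm, ← hM, ← hD, ← hβ]
  rw [← hw2]
  have habs2 : |u j ^ 2 + (N:ℝ) * (u (j+1) ^ 2 - u j ^ 2) * (x - (j:ℝ)/N) - w ^ 2|
      ≤ |u j ^ 2 - w ^ 2| + |(N:ℝ) * (x - (j:ℝ)/N)| * |u (j+1) ^ 2 - u j ^ 2| := by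
    calc |u j ^ 2 + (N:ℝ) * (u (j+1) ^ 2 - u j ^ 2) * (x - (j:ℝ)/N) - w ^ 2|
        = |(u j ^ 2 - w ^ 2) + ((N:ℝ) * (x - (j:ℝ)/N)) * (u (j+1) ^ 2 - u j ^ 2)| := by
          ring_nf
      _ ≤ |u j ^ 2 - w ^ 2| + |((N:ℝ) * (x - (j:ℝ)/N)) * (u (j+1) ^ 2 - u j ^ 2)| := abs_add_le _ _
      _ = |u j ^ 2 - w ^ 2| + |(N:ℝ) * (x - (j:ℝ)/N)| * |u (j+1) ^ 2 - u j ^ 2| := by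
          rw [abs_mul]
  calc |u j ^ 2 + (N:ℝ) * (u (j+1) ^ 2 - u j ^ 2) * (x - (j:ℝ)/N) - w ^ 2|
      ≤ |u j ^ 2 - w ^ 2| + |(N:ℝ) * (x - (j:ℝ)/N)| * |u (j+1) ^ 2 - u j ^ 2| := habs2
    _ ≤ 2 * M * (2 * D * β ^ 2 + (M ^ 3 - m ^ 3)) / (3 * m ^ 2) / N + 2 * M * β / N :=
        add_le_add key1 key2
    _ = CC (u 0) (u N) / N := by rw [hCC]; ring

lemma rpow_three_half (a : ℝ) (ha : 0 < a) : a ^ ((3:ℝ)/2) = Real.sqrt a ^ 3 := by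
  rw [Real.sqrt_eq_rpow, ← Real.rpow_natCast (a ^ ((1:ℝ)/2)) 3, ← Real.rpow_mul ha.le]
  norm_num

lemma flux_const (N : ℕ) (hN : 2 ≤ N) (T : ℕ → ℝ) (hpos : ∀ n ≤ N, 0 < T n)
    (hSC : ∀ n : ℕ, 1 ≤ n → n ≤ N - 1 →
      (T n - T (n + 1)) / ((T n) ^ (-(1:ℝ)/2) + (T (n + 1)) ^ (-(1:ℝ)/2)) +
        (T n - T (n - 1)) / ((T n) ^ (-(1:ℝ)/2) + (T (n - 1)) ^ (-(1:ℝ)/2)) = 0) :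
    ∀ n < N, Real.sqrt (T n) * Real.sqrt (T (n+1)) * (Real.sqrt (T (n+1)) - Real.sqrt (T n))
      = Real.sqrt (T 0) * Real.sqrt (T 1) * (Real.sqrt (T 1) - Real.sqrt (T 0)) := by
  intro n
  induction n with
  | zero => intro _; rfl
  | succ n ih =>
    intro hn
    have h1 := hSC (n+1) (by omega) (by omega)
    simp only [Nat.add_sub_cancel] at h1
    rw [quot_eq _ _ (hpos (n+1) (by omega)) (hpos (n+2) (by omega)),
        quot_eq _ _ (hpos (n+1) (by omega)) (hpos n (by omega))] at h1
    have h2 := ih (by omega)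
    linear_combination h2 - h1

lemma CC_nonneg (a b : ℝ) (ha : 0 < a) (hb : 0 < b) : 0 ≤ CC a b := by
  have hm : 0 < min a b := lt_min ha hb
  have hM : 0 < max a b := lt_of_lt_of_le hm min_le_max
  have hD : 0 ≤ max a b - min a b := sub_nonneg.2 min_le_max
  have hc : min a b ^ 3 ≤ max a b ^ 3 := pow_le_pow_left₀ hm.le min_le_max 3
  simp only [CC]
  have h1 : 0 ≤ (max a b - min a b) * max a b ^ 2 / min a b ^ 2 := by positivity
  have h2 : 0 ≤ 2 * (max a b - min a b)
      * ((max a b - min a b) * max a b ^ 2 / min a b ^ 2) ^ 2 := by positivity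
  have h3 : (0:ℝ) ≤ max a b ^ 3 - min a b ^ 3 := sub_nonneg.2 hc
  have h4 : (0:ℝ) < 3 * min a b ^ 2 := by positivity
  positivity

set_option maxHeartbeats 1000000 in
/-- if for each `N` the family `(T N 0, …, T N N)` is the (unique)
positive confined self-consistent profile with boundary values `T_L, T_R`, then
the piecewise-linear interpolations `h_N(x) = T_L + ∫_0^x g_N`, with `g_N` the
step function of slopes `N·(T_{i+1}−T_i)`, converge uniformly on `[0,1]` to
`h(x) = (T_L^{3/2} + x(T_R^{3/2}−T_L^{3/2}))^{2/3}`. -/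
theorem stmt_19 (TL TR : ℝ) (hTL : 0 < TL) (hTR : 0 < TR)
    (T : ℕ → ℕ → ℝ)
    (hpos : ∀ N, 2 ≤ N → ∀ n ≤ N, 0 < T N n)
    (hbc0 : ∀ N, 2 ≤ N → T N 0 = TL)
    (hbcN : ∀ N, 2 ≤ N → T N N = TR)
    (hSC : ∀ N, 2 ≤ N → ∀ n : ℕ, 1 ≤ n → n ≤ N - 1 →
      (T N n - T N (n + 1)) /
          ((T N n) ^ (-(1:ℝ)/2) + (T N (n + 1)) ^ (-(1:ℝ)/2)) +
        (T N n - T N (n - 1)) /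
          ((T N n) ^ (-(1:ℝ)/2) + (T N (n - 1)) ^ (-(1:ℝ)/2)) = 0) :
    let g : ℕ → ℝ → ℝ := fun N t => ∑ i ∈ Finset.range N,
      Set.indicator (Set.Ico ((i : ℝ) / N) (((i : ℝ) + 1) / N))
        (fun _ => (N : ℝ) * (T N (i + 1) - T N i)) t
    let hInterp : ℕ → ℝ → ℝ := fun N x => TL + ∫ t in (0:ℝ)..x, g N t
    let h : ℝ → ℝ := fun x =>
      (TL ^ ((3:ℝ)/2) + x * (TR ^ ((3:ℝ)/2) - TL ^ ((3:ℝ)/2))) ^ ((2:ℝ)/3)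
    TendstoUniformlyOn hInterp h atTop (Set.Icc 0 1) := by
  intro g hInterp h
  rw [Metric.tendstoUniformlyOn_iff]
  intro ε hε
  set C := CC (Real.sqrt TL) (Real.sqrt TR) with hC
  have hC0 : 0 ≤ C := CC_nonneg _ _ (Real.sqrt_pos.2 hTL) (Real.sqrt_pos.2 hTR)
  obtain ⟨N₀, hN₀⟩ : ∃ N₀ : ℕ, C / ε < N₀ := exists_nat_gt _
  filter_upwards [eventually_ge_atTop (max 2 N₀)] with N hNm x hx
  have hN2 : 2 ≤ N := le_trans (le_max_left _ _) hNm
  have hNpos : (0:ℝ) < N := by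
    have : (0:ℕ) < N := by omega
    exact_mod_cast this
  have hNne : (N:ℝ) ≠ 0 := ne_of_gt hNpos
  obtain ⟨hx0, hx1⟩ := Set.mem_Icc.mp hx
  -- grid index
  set j := min (⌊(N:ℝ)*x⌋₊) (N-1) with hjdef
  have hjN : j < N := by
    have := Nat.min_le_right (⌊(N:ℝ)*x⌋₊) (N-1)
    omega
  have hjx : (j:ℝ)/N ≤ x := by
    rw [div_le_iff₀ hNpos]
    have h1 : (j:ℕ) ≤ ⌊(N:ℝ)*x⌋₊ := Nat.min_le_left _ _
    have h2 : ((⌊(N:ℝ)*x⌋₊ : ℕ):ℝ) ≤ (N:ℝ)*x := Nat.floor_le (by positivity)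
    have h3 : ((j:ℕ):ℝ) ≤ ((⌊(N:ℝ)*x⌋₊ : ℕ):ℝ) := Nat.cast_le.2 h1
    linarith
  have hxj1 : x ≤ ((j:ℝ)+1)/N := by
    rw [le_div_iff₀ hNpos]
    rcases le_or_gt (⌊(N:ℝ)*x⌋₊) (N-1) with hcas | hcas
    · have hje : j = ⌊(N:ℝ)*x⌋₊ := min_eq_left hcas
      have h4 := Nat.lt_floor_add_one ((N:ℝ)*x)
      rw [hje]
      linarith
    · have hje : j = N - 1 := min_eq_right hcas.le
      have h5 : ((j:ℕ):ℝ) + 1 = (N:ℝ) := by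
        rw [hje]
        have : (1:ℕ) ≤ N := by omega
        push_cast [Nat.cast_sub this]
        ring
      rw [h5]
      nlinarith
  -- square roots
  set u : ℕ → ℝ := fun n => Real.sqrt (T N n) with hu
  have hupos : ∀ n ≤ N, 0 < u n := fun n hn => Real.sqrt_pos.2 (hpos N hN2 n hn)
  have hconst := flux_const N hN2 (T N) (hpos N hN2) (hSC N hN2)
  have hest := profile_est N hN2 u hupos hconst j hjN x hjx hxj1 hx1
  have hu0 : u 0 = Real.sqrt TL := congrArg Real.sqrt (hbc0 N hN2)
  have huN : u N = Real.sqrt TR := congrArg Real.sqrt (hbcN N hN2)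
  have hT : ∀ n ≤ N, T N n = u n ^ 2 := fun n hn => (Real.sq_sqrt (hpos N hN2 n hn).le).symm
  -- value of the interpolation
  have hform := interp_formula N (fun i => (N:ℝ) * (T N (i+1) - T N i))
      (fun k => T N k - TL) (by simp [hbc0 N hN2])
      (fun i => by field_simp; ring) j hjN x hjx hxj1
  have hval : hInterp N x = T N j + (N:ℝ) * (T N (j+1) - T N j) * (x - (j:ℝ)/N) := by
    show TL + ∫ t in (0:ℝ)..x, g N t = _
    have : ∫ t in (0:ℝ)..x, g N t
        = (T N j - TL) + (N:ℝ) * (T N (j+1) - T N j) * (x - (j:ℝ)/N) := hform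
    rw [this]
    ring
  have hEq : hInterp N x - h x = u j ^ 2 + (N:ℝ) * (u (j+1) ^ 2 - u j ^ 2) * (x - (j:ℝ)/N)
      - ((u 0) ^ 3 + x * ((u N) ^ 3 - (u 0) ^ 3)) ^ ((2:ℝ)/3) := by
    rw [hval, hT j hjN.le, hT (j+1) hjN]
    show _ - (TL ^ ((3:ℝ)/2) + x * (TR ^ ((3:ℝ)/2) - TL ^ ((3:ℝ)/2))) ^ ((2:ℝ)/3) = _
    rw [rpow_three_half TL hTL, rpow_three_half TR hTR, ← hu0, ← huN]
  rw [Real.dist_eq, abs_sub_comm, hEq]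
  have hCeq : CC (u 0) (u N) = C := by rw [hu0, huN]
  rw [hCeq] at hest
  refine lt_of_le_of_lt hest ?_
  rw [div_lt_iff₀ hNpos]
  have h7 : (N₀:ℝ) ≤ (N:ℝ) := Nat.cast_le.2 (le_trans (le_max_right _ _) hNm)
  have h8 : C < ε * N₀ := by
    rw [div_lt_iff₀ hε] at hN₀
    linarith
  nlinarith
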